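/- Let T be a measurable space, Q a Markov kernel on T, and A : T → (E →L[ℝ] E) measurable with A(t) invertible for every t and with a uniform bound C ≥ 1 such that ‖A(t)‖ ≤ C and ‖A(t)⁻¹‖ ≤ C for all t. Define the Markov kernel κ̂ on T × S by κ̂(t, v) := (Q t).map (s ↦ (s, ‖A(t)v‖⁻¹ • A(t)v)), and the bounded measurable potential φ̂(t,v) := log‖A(t)v‖. Then for every n ≥ 1 and every (t, v) ∈ T × S, Σ_{j=0}^{n-1} (κ̂ʲφ̂)(t,v) = ∫_{T^{n-1}} log‖A(s_{n-1}) ∘ ⋯ ∘ A(s_1) ∘ A(t) v‖ dQ^{n-1}_t(s_1, …, s_{n-1}), where Q^{n-1}_t is the law of the first n−1 steps of the Q-Markov chain started at t, i.e. the iterated composition-product Q(t, ds_1) Q(s_1, ds_2) ⋯ Q(s_{n-2}, ds_{n-1}). -/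

import Mathlib

open MeasureTheory ProbabilityTheory Filter
open scoped Classical

noncomputable section

abbrev Euc (d : ℕ) := EuclideanSpace ℝ (Fin d)

/-- Unit sphere of `EuclideanSpace ℝ (Fin d)`. -/
abbrev UnitSphere (d : ℕ) := (Metric.sphere (0 : Euc d) 1 : Set (Euc d))

/-- Projection of a nonzero vector onto the unit sphere (arbitrary unit value at `0`). -/
def projSphere {d : ℕ} (hd : 0 < d) (w : Euc d) : UnitSphere d :=
  if h : w = 0 then
    ⟨EuclideanSpace.single (⟨0, hd⟩ : Fin d) (1 : ℝ), by
      simp [mem_sphere_zero_iff_norm, EuclideanSpace.norm_single]⟩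
  else
    ⟨‖w‖⁻¹ • w, by
      have hw : ‖w‖ ≠ 0 := norm_ne_zero_iff.mpr h
      simp [mem_sphere_zero_iff_norm, norm_smul, abs_of_nonneg (norm_nonneg w),
        inv_mul_cancel₀ hw]⟩

/-- Product of matrices along a finite word, latest factor on the left:
`prodCLM A n t = A(t_{n-1}) ∘ ⋯ ∘ A(t_0)`. -/
def prodCLM {T : Type*} {d : ℕ} (A : T → (Euc d →L[ℝ] Euc d)) :
    (n : ℕ) → (Fin n → T) → (Euc d →L[ℝ] Euc d)
  | 0, _ => ContinuousLinearMap.id ℝ (Euc d)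
  | n + 1, t => (A (t (Fin.last n))).comp (prodCLM A n (fun i => t i.castSucc))

/-- The integral operator of a measure-valued transition function. -/
def measOp {Z : Type*} [MeasurableSpace Z] (q : Z → Measure Z) (u : Z → ℝ) : Z → ℝ :=
  fun z => ∫ w, u w ∂(q z)

/-- `j`-fold application of the integral operator. -/
def measOpIter {Z : Type*} [MeasurableSpace Z] (q : Z → Measure Z) : ℕ → (Z → ℝ) → (Z → ℝ)
  | 0 => fun u => u
  | n + 1 => fun u => measOp q (measOpIter q n u)

/-- The law of the first `k` steps (after the start) of the `Q`-Markov chain started at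
`t`: the iterated composition-product `Q(t,ds₁) Q(s₁,ds₂) ⋯ Q(s_{k-1},ds_k)`. -/
def chainLaw {T : Type*} [MeasurableSpace T] (Q : Kernel T T) :
    (k : ℕ) → T → Measure (Fin k → T)
  | 0 => fun _ => Measure.dirac (fun i : Fin 0 => i.elim0)
  | k + 1 => fun t => (Q t).bind (fun s => (chainLaw Q k s).map (Fin.cons s))

/-! ### Auxiliary lemmas -/

section Chain

variable {T : Type*} [MeasurableSpace T]

lemma measurable_finCons {k : ℕ} :
    Measurable fun p : T × (Fin k → T) => (Fin.cons p.1 p.2 : Fin (k + 1) → T) := by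
  rw [measurable_pi_iff]
  intro i
  induction i using Fin.cases with
  | zero => simpa using measurable_fst
  | succ i => simp only [Fin.cons_succ]; exact (measurable_pi_apply i).comp measurable_snd

lemma measurable_finCons' {k : ℕ} (s : T) :
    Measurable fun w : Fin k → T => (Fin.cons (α := fun _ => T) s w) := by
  rw [measurable_pi_iff]
  intro i
  induction i using Fin.cases with
  | zero => simpa using measurable_const
  | succ i => simpa using measurable_pi_apply i

lemma chainLaw_succ_eq (Q : Kernel T T) [IsMarkovKernel Q] {k : ℕ}
    (κ : Kernel T (Fin k → T)) [IsMarkovKernel κ] (hκ : ∀ s, κ s = chainLaw Q k s) (t : T) :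
    chainLaw Q (k + 1) t
      = ((Q ⊗ₖ κ.comap Prod.snd measurable_snd) t).map
          (fun p : T × (Fin k → T) => (Fin.cons p.1 p.2 : Fin (k+1) → T)) := by
  have hg : Measurable (fun s : T =>
      (chainLaw Q k s).map (fun w => (Fin.cons s w : Fin (k+1) → T))) := by
    have he : ∀ s : T, (Kernel.map (Kernel.id ×ₖ κ)
          (fun p : T × (Fin k → T) => (Fin.cons p.1 p.2 : Fin (k+1) → T))) s
        = (chainLaw Q k s).map (fun w => (Fin.cons s w : Fin (k+1) → T)) := by
      intro s
      rw [Kernel.map_apply _ measurable_finCons, Kernel.prod_apply, Kernel.id_apply,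
        Measure.dirac_prod, Measure.map_map measurable_finCons measurable_prodMk_left, ← hκ s]
      rfl
    have := (Kernel.map (Kernel.id ×ₖ κ)
      (fun p : T × (Fin k → T) => (Fin.cons p.1 p.2 : Fin (k+1) → T))).measurable
    simpa [funext he] using this
  ext A hA
  rw [Measure.map_apply measurable_finCons hA,
    Kernel.compProd_apply (measurable_finCons hA)]
  show (chainLaw Q (k+1) t) A = _
  rw [show chainLaw Q (k+1) t = (Q t).bind
      (fun s => (chainLaw Q k s).map (fun w => (Fin.cons s w : Fin (k+1) → T))) from rfl,
    Measure.bind_apply hA hg.aemeasurable]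
  refine lintegral_congr fun s => ?_
  rw [Measure.map_apply (measurable_finCons' s) hA, Kernel.comap_apply, hκ s]
  rfl

lemma chainKer_exists (Q : Kernel T T) [IsMarkovKernel Q] (k : ℕ) :
    ∃ κ : Kernel T (Fin k → T), IsMarkovKernel κ ∧ ∀ t, κ t = chainLaw Q k t := by
  induction k with
  | zero =>
    refine ⟨Kernel.deterministic (fun _ => fun i : Fin 0 => i.elim0) measurable_const,
      inferInstance, fun t => ?_⟩
    rw [Kernel.deterministic_apply]; rfl
  | succ k ih =>
    obtain ⟨κ, hκM, hκ⟩ := ih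
    haveI := hκM
    refine ⟨Kernel.map (Q ⊗ₖ κ.comap Prod.snd measurable_snd)
      (fun p : T × (Fin k → T) => (Fin.cons p.1 p.2 : Fin (k+1) → T)), ?_, fun t => ?_⟩
    · exact Kernel.IsMarkovKernel.map _ measurable_finCons
    · rw [Kernel.map_apply _ measurable_finCons, chainLaw_succ_eq Q κ hκ]

lemma chainLaw_prob (Q : Kernel T T) [IsMarkovKernel Q] (k : ℕ) (t : T) :
    IsProbabilityMeasure (chainLaw Q k t) := by
  obtain ⟨κ, hκM, hκ⟩ := chainKer_exists Q k
  rw [← hκ]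
  exact hκM.isProbabilityMeasure t

lemma integrable_of_bdd {Z : Type*} [MeasurableSpace Z] {μ : Measure Z} [IsFiniteMeasure μ]
    {f : Z → ℝ} {M : ℝ} (hf : AEStronglyMeasurable f μ) (h : ∀ z, |f z| ≤ M) : Integrable f μ :=
  ⟨hf, HasFiniteIntegral.of_bounded (ae_of_all _ fun z => h z)⟩

lemma integral_chainLaw_succ (Q : Kernel T T) [IsMarkovKernel Q] {k : ℕ}
    {u : (Fin (k + 1) → T) → ℝ} (hu : Measurable u) {M : ℝ} (hM : ∀ x, |u x| ≤ M) (t : T) :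
    ∫ w, u w ∂chainLaw Q (k + 1) t
      = ∫ s, ∫ w, u (Fin.cons s w) ∂chainLaw Q k s ∂Q t := by
  obtain ⟨κ, hκM, hκ⟩ := chainKer_exists Q k
  haveI := hκM
  rw [chainLaw_succ_eq Q κ hκ t,
    integral_map measurable_finCons.aemeasurable hu.aestronglyMeasurable]
  rw [ProbabilityTheory.integral_compProd]
  · refine integral_congr_ae (ae_of_all _ fun s => ?_)
    simp only [Kernel.comap_apply]
    rw [hκ s]
  · exact integrable_of_bdd ((hu.comp measurable_finCons).aestronglyMeasurable) (fun z => hM _)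

lemma sm_integral_chainLaw {α : Type*} [MeasurableSpace α] (Q : Kernel T T) [IsMarkovKernel Q]
    (k : ℕ) {f : α × (Fin k → T) → ℝ} (hf : StronglyMeasurable f)
    {g : α → T} (hg : Measurable g) :
    StronglyMeasurable fun a => ∫ w, f (a, w) ∂chainLaw Q k (g a) := by
  obtain ⟨κ, hκM, hκ⟩ := chainKer_exists Q k
  haveI := hκM
  have := hf.integral_kernel_prod_right' (κ := κ.comap g hg)
  simp_rw [Kernel.comap_apply, hκ] at this
  exact this

end Chain

section ProdLemmas
variable {T : Type*} {d : ℕ} {A : T → (Euc d →L[ℝ] Euc d)}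

lemma prodCLM_cons (A : T → (Euc d →L[ℝ] Euc d)) :
    ∀ (k : ℕ) (s₀ : T) (s : Fin k → T),
      prodCLM A (k + 1) (Fin.cons s₀ s) = (prodCLM A k s).comp (A s₀)
  | 0, s₀, s => by
    simp [prodCLM, Fin.last]
  | k + 1, s₀, s => by
    have harg : (fun i : Fin (k + 1) => (Fin.cons (α := fun _ => T) s₀ s) i.castSucc)
        = Fin.cons s₀ (fun i : Fin k => s i.castSucc) := by
      funext i
      induction i using Fin.cases with
      | zero => simp
      | succ i => simp [← Fin.succ_castSucc]
    show (A (Fin.cons (α := fun _ => T) s₀ s (Fin.last (k+1)))).comp _ = _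
    rw [harg, prodCLM_cons A k s₀ (fun i => s i.castSucc), ← Fin.succ_last, Fin.cons_succ]
    rfl

lemma measurable_prodCLM [MeasurableSpace T] (hA : Measurable A) :
    ∀ k : ℕ, Measurable fun s : Fin k → T => prodCLM A k s
  | 0 => measurable_const
  | k + 1 => by
    have h1 : Measurable fun s : Fin (k+1) → T => A (s (Fin.last k)) :=
      hA.comp (measurable_pi_apply _)
    have h2 : Measurable fun s : Fin (k+1) → T =>
        prodCLM A k (fun i => s i.castSucc) := by
      refine (measurable_prodCLM hA k).comp ?_
      rw [measurable_pi_iff]; exact fun i => measurable_pi_apply _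
    have hcomp : Continuous fun p : (Euc d →L[ℝ] Euc d) × (Euc d →L[ℝ] Euc d) =>
        p.1.comp p.2 := isBoundedBilinearMap_comp.continuous
    exact (hcomp.measurable.comp (h1.prodMk h2) : _)

lemma norm_prodCLM_le {C : ℝ} (hC : 1 ≤ C) (hbdd : ∀ t, ‖A t‖ ≤ C) :
    ∀ (k : ℕ) (s : Fin k → T) (x : Euc d), ‖prodCLM A k s x‖ ≤ C ^ k * ‖x‖
  | 0, s, x => by simp [prodCLM]
  | k + 1, s, x => by
    have h1 : ‖prodCLM A (k+1) s x‖ ≤ C * ‖prodCLM A k (fun i => s i.castSucc) x‖ := by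
      refine le_trans ((A (s (Fin.last k))).le_opNorm _) ?_
      exact mul_le_mul_of_nonneg_right (hbdd _) (norm_nonneg _)
    refine h1.trans ?_
    rw [pow_succ, mul_comm (C ^ k) C, mul_assoc]
    exact mul_le_mul_of_nonneg_left (norm_prodCLM_le hC hbdd k _ x) (by linarith)

lemma le_norm_prodCLM {Ainv : T → (Euc d →L[ℝ] Euc d)}
    (hAinv : ∀ t, (Ainv t).comp (A t) = ContinuousLinearMap.id ℝ (Euc d))
    {C : ℝ} (hC : 1 ≤ C) (hbdd' : ∀ t, ‖Ainv t‖ ≤ C) :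
    ∀ (k : ℕ) (s : Fin k → T) (x : Euc d), ‖x‖ ≤ C ^ k * ‖prodCLM A k s x‖
  | 0, s, x => by simp [prodCLM]
  | k + 1, s, x => by
    have hkey : ∀ (t : T) (y : Euc d), ‖y‖ ≤ C * ‖A t y‖ := by
      intro t y
      have : Ainv t (A t y) = y := by
        have := congrArg (fun B : Euc d →L[ℝ] Euc d => B y) (hAinv t)
        simpa using this
      calc ‖y‖ = ‖Ainv t (A t y)‖ := by rw [this]
        _ ≤ ‖Ainv t‖ * ‖A t y‖ := (Ainv t).le_opNorm _
        _ ≤ C * ‖A t y‖ := mul_le_mul_of_nonneg_right (hbdd' _) (norm_nonneg _)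
    calc ‖x‖ ≤ C ^ k * ‖prodCLM A k (fun i => s i.castSucc) x‖ :=
          le_norm_prodCLM hAinv hC hbdd' k _ x
      _ ≤ C ^ k * (C * ‖A (s (Fin.last k)) (prodCLM A k (fun i => s i.castSucc) x)‖) :=
          mul_le_mul_of_nonneg_left (hkey _ _) (by positivity)
      _ = C ^ (k+1) * ‖prodCLM A (k+1) s x‖ := by
          rw [pow_succ]; ring_nf; rfl

end ProdLemmas

lemma abs_log_le {x R : ℝ} (hR : 1 ≤ R) (h1 : R⁻¹ ≤ x) (h2 : x ≤ R) :
    |Real.log x| ≤ Real.log R := by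
  have hR0 : (0:ℝ) < R := lt_of_lt_of_le one_pos hR
  have hx : 0 < x := lt_of_lt_of_le (inv_pos.2 hR0) h1
  rw [abs_le]
  constructor
  · rw [← Real.log_inv]
    exact Real.log_le_log (inv_pos.2 hR0) h1
  · exact Real.log_le_log hx h2

lemma abs_log_le' {y a R : ℝ} (hR : 1 ≤ R) (ha : 0 < a)
    (h1 : R⁻¹ * a ≤ y) (h2 : y ≤ R * a) :
    |Real.log y| ≤ Real.log R + |Real.log a| := by
  have hR0 : (0:ℝ) < R := lt_of_lt_of_le one_pos hR
  have hy : 0 < y := lt_of_lt_of_le (by positivity) h1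
  have hz1 : R⁻¹ ≤ y / a := (le_div_iff₀ ha).2 (by linarith [h1])
  have hz2 : y / a ≤ R := (div_le_iff₀ ha).2 (by linarith [h2])
  have : Real.log y = Real.log (y / a) + Real.log a := by
    rw [← Real.log_mul (by positivity) (ne_of_gt ha)]
    congr 1
    field_simp
  rw [this]
  refine (abs_add_le _ _).trans ?_
  exact add_le_add_left (abs_log_le hR hz1 hz2) _

/-! ### The expected log-norm functional -/

section L
variable {T : Type*} [MeasurableSpace T] {d : ℕ}
variable (Q : Kernel T T) [IsMarkovKernel Q]
variable (A : T → (Euc d →L[ℝ] Euc d))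

/-- The expected log-norm of the product of `j` random matrices applied to `x`. -/
def Lfun (j : ℕ) (r : T) (x : Euc d) : ℝ :=
  ∫ s, Real.log ‖prodCLM A j s x‖ ∂chainLaw Q j r

variable {A}
variable (hA : Measurable A) {Ainv : T → (Euc d →L[ℝ] Euc d)}
  (hAinv : ∀ t, (Ainv t).comp (A t) = ContinuousLinearMap.id ℝ (Euc d))
  {C : ℝ} (hC : 1 ≤ C) (hbdd : ∀ t, ‖A t‖ ≤ C) (hbdd' : ∀ t, ‖Ainv t‖ ≤ C)

set_option linter.unusedSectionVars false
include hA hAinv hC hbdd hbdd'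

lemma norm_le_A (t : T) (y : Euc d) : ‖y‖ ≤ C * ‖A t y‖ := by
  have h : Ainv t (A t y) = y := by
    have := congrArg (fun B : Euc d →L[ℝ] Euc d => B y) (hAinv t)
    simpa using this
  calc ‖y‖ = ‖Ainv t (A t y)‖ := by rw [h]
    _ ≤ ‖Ainv t‖ * ‖A t y‖ := (Ainv t).le_opNorm _
    _ ≤ C * ‖A t y‖ := mul_le_mul_of_nonneg_right (hbdd' _) (norm_nonneg _)

lemma A_ne_zero {x : Euc d} (hx : x ≠ 0) (t : T) : A t x ≠ 0 := by
  intro h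
  have h1 := norm_le_A hA hAinv hC hbdd hbdd' t x
  rw [h, norm_zero, mul_zero] at h1
  exact hx (norm_le_zero_iff.mp h1)

lemma abs_log_A_le {x : Euc d} (hx : x ≠ 0) (t : T) :
    |Real.log ‖A t x‖| ≤ Real.log C + |Real.log ‖x‖| := by
  refine abs_log_le' hC (norm_pos_iff.mpr hx) ?_ ?_
  · rw [inv_mul_le_iff₀ (lt_of_lt_of_le one_pos hC)]
    exact norm_le_A hA hAinv hC hbdd hbdd' t x
  · exact ((A t).le_opNorm x).trans (mul_le_mul_of_nonneg_right (hbdd t) (norm_nonneg x))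

lemma measurable_log_prodCLM (j : ℕ) (x : Euc d) :
    Measurable fun s : Fin j → T => Real.log ‖prodCLM A j s x‖ := by
  refine Real.measurable_log.comp (measurable_norm.comp ?_)
  exact (isBoundedBilinearMap_apply.continuous.measurable).comp
    ((measurable_prodCLM hA j).prodMk measurable_const)

lemma abs_log_prodCLM_le (j : ℕ) (s : Fin j → T) {x : Euc d} (hx : x ≠ 0) :
    |Real.log ‖prodCLM A j s x‖| ≤ Real.log (C ^ j) + |Real.log ‖x‖| := by
  refine abs_log_le' (one_le_pow₀ hC) (norm_pos_iff.mpr hx) ?_ ?_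
  · rw [inv_mul_le_iff₀ (pow_pos (lt_of_lt_of_le one_pos hC) j)]
    exact le_norm_prodCLM hAinv hC hbdd' j s x
  · exact norm_prodCLM_le hC hbdd j s x

lemma prodCLM_ne_zero (j : ℕ) (s : Fin j → T) {x : Euc d} (hx : x ≠ 0) :
    prodCLM A j s x ≠ 0 := by
  intro h
  have h1 := le_norm_prodCLM hAinv hC hbdd' j s x
  rw [h, norm_zero, mul_zero] at h1
  exact hx (norm_le_zero_iff.mp h1)

lemma integrable_log_prodCLM (j : ℕ) (r : T) {x : Euc d} (hx : x ≠ 0) :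
    Integrable (fun s => Real.log ‖prodCLM A j s x‖) (chainLaw Q j r) := by
  haveI := chainLaw_prob Q j r
  exact integrable_of_bdd (measurable_log_prodCLM hA hAinv hC hbdd hbdd' j x).aestronglyMeasurable
    (fun s => abs_log_prodCLM_le hA hAinv hC hbdd hbdd' j s hx)

lemma Lfun_abs_le (j : ℕ) (r : T) {x : Euc d} (hx : x ≠ 0) :
    |Lfun Q A j r x| ≤ Real.log (C ^ j) + |Real.log ‖x‖| := by
  haveI := chainLaw_prob Q j r
  have := norm_integral_le_of_norm_le_const (μ := chainLaw Q j r)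
    (f := fun s => Real.log ‖prodCLM A j s x‖)
    (C := Real.log (C ^ j) + |Real.log ‖x‖|)
    (ae_of_all _ fun s => by
      rw [Real.norm_eq_abs]; exact abs_log_prodCLM_le hA hAinv hC hbdd hbdd' j s hx)
  simpa [Lfun, Real.norm_eq_abs] using this

lemma Lfun_zero (r : T) (x : Euc d) : Lfun Q A 0 r x = Real.log ‖x‖ := by
  have h : chainLaw Q 0 r = Measure.dirac (fun i : Fin 0 => i.elim0) := rfl
  rw [Lfun, h]
  simp [prodCLM]

lemma Lfun_succ (j : ℕ) (r : T) {x : Euc d} (hx : x ≠ 0) :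
    Lfun Q A (j + 1) r x = ∫ s, Lfun Q A j s (A s x) ∂Q r := by
  rw [Lfun, integral_chainLaw_succ Q (measurable_log_prodCLM hA hAinv hC hbdd hbdd' (j+1) x)
    (fun w => abs_log_prodCLM_le hA hAinv hC hbdd hbdd' (j+1) w hx) r]
  refine integral_congr_ae (ae_of_all _ fun s => ?_)
  refine integral_congr_ae (ae_of_all _ fun w => ?_)
  show Real.log ‖(prodCLM A (j + 1) (Fin.cons s w)) x‖ = Real.log ‖(prodCLM A j w) ((A s) x)‖
  rw [prodCLM_cons]
  rfl

lemma Lfun_smul (j : ℕ) (r : T) {x : Euc d} (hx : x ≠ 0) {c : ℝ} (hc : 0 < c) :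
    Lfun Q A j r (c • x) = Real.log c + Lfun Q A j r x := by
  haveI := chainLaw_prob Q j r
  have hpt : ∀ s : Fin j → T,
      Real.log ‖prodCLM A j s (c • x)‖ = Real.log c + Real.log ‖prodCLM A j s x‖ := by
    intro s
    rw [ContinuousLinearMap.map_smul, norm_smul, Real.norm_eq_abs, abs_of_pos hc,
      Real.log_mul (ne_of_gt hc)
        (norm_ne_zero_iff.mpr (prodCLM_ne_zero hA hAinv hC hbdd hbdd' j s hx))]
  rw [Lfun]
  simp_rw [hpt]
  rw [integral_add (integrable_const _)
    (integrable_log_prodCLM Q hA hAinv hC hbdd hbdd' j r hx), integral_const]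
  simp [Lfun]

lemma Lfun_sm (j : ℕ) :
    StronglyMeasurable fun p : T × Euc d => Lfun Q A j p.1 p.2 := by
  have hf : StronglyMeasurable
      fun q : (T × Euc d) × (Fin j → T) => Real.log ‖prodCLM A j q.2 q.1.2‖ := by
    refine (Real.measurable_log.comp (measurable_norm.comp ?_)).stronglyMeasurable
    exact (isBoundedBilinearMap_apply.continuous.measurable).comp
      (((measurable_prodCLM hA j).comp measurable_snd).prodMk measurable_fst.snd)
  exact sm_integral_chainLaw Q j hf measurable_fst

/-! ### The key telescoping step -/

lemma key_step (hd : 0 < d)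
    (κh : T × UnitSphere d → Measure (T × UnitSphere d))
    (hκh : ∀ t v, κh (t, v) = (Q t).map (fun s => (s, projSphere hd (A t v.1))))
    (φ : T × UnitSphere d → ℝ)
    (hφ : ∀ t v, φ (t, v) = Real.log ‖A t v.1‖) :
    ∀ (j : ℕ) (r : T) (v : UnitSphere d),
      measOpIter κh (j + 1) φ (r, v)
        = Lfun Q A (j + 1) r (A r v.1) - Lfun Q A j r (A r v.1) := by
  have hφeq : φ = fun z : T × UnitSphere d => Real.log ‖A z.1 (z.2 : Euc d)‖ :=
    funext fun z => hφ z.1 z.2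
  have hevalm : Measurable fun p : (Euc d →L[ℝ] Euc d) × Euc d => p.1 p.2 :=
    isBoundedBilinearMap_apply.continuous.measurable
  have hφm : Measurable φ := by
    rw [hφeq]
    exact Real.measurable_log.comp (measurable_norm.comp (hevalm.comp
      ((hA.comp measurable_fst).prodMk (measurable_subtype_coe.comp measurable_snd))))
  intro j
  induction j with
  | zero =>
    intro r v
    have hv1 : ‖(v : Euc d)‖ = 1 := mem_sphere_zero_iff_norm.mp v.2
    have hvne : (v : Euc d) ≠ 0 := fun h => by simp [h] at hv1
    set w : Euc d := A r (v : Euc d) with hw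
    have hwne : w ≠ 0 := A_ne_zero hA hAinv hC hbdd hbdd' hvne r
    have hproj : ((projSphere hd w) : Euc d) = ‖w‖⁻¹ • w := by
      rw [projSphere, dif_neg hwne]
    have he : Measurable fun s : T => (s, projSphere hd w) :=
      measurable_id.prodMk measurable_const
    show ∫ z, φ z ∂κh (r, v) = _
    rw [hκh r v, integral_map he.aemeasurable hφm.aestronglyMeasurable]
    have hpt : ∀ s : T, φ (s, projSphere hd w)
        = Real.log ‖w‖⁻¹ + Real.log ‖A s w‖ := by
      intro s
      rw [hφ s _, hproj, ContinuousLinearMap.map_smul, norm_smul, Real.norm_eq_abs,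
        abs_of_pos (inv_pos.2 (norm_pos_iff.mpr hwne)),
        Real.log_mul (ne_of_gt (inv_pos.2 (norm_pos_iff.mpr hwne)))
          (norm_ne_zero_iff.mpr (A_ne_zero hA hAinv hC hbdd hbdd' hwne s))]
    have hgm : Measurable fun s : T => Real.log ‖A s w‖ :=
      Real.measurable_log.comp (measurable_norm.comp
        (hevalm.comp (hA.prodMk measurable_const)))
    have hgint : Integrable (fun s => Real.log ‖A s w‖) (Q r) :=
      integrable_of_bdd hgm.aestronglyMeasurable
        (fun s => abs_log_A_le hA hAinv hC hbdd hbdd' hwne s)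
    rw [show (fun s => φ (s, projSphere hd w))
        = fun s => Real.log ‖w‖⁻¹ + Real.log ‖A s w‖ from funext hpt]
    rw [integral_add (integrable_const _) hgint, integral_const]
    rw [Lfun_succ Q hA hAinv hC hbdd hbdd' 0 r hwne, Lfun_zero Q hA hAinv hC hbdd hbdd']
    have hL0 : ∀ s : T, Lfun Q A 0 s (A s w) = Real.log ‖A s w‖ :=
      fun s => Lfun_zero Q hA hAinv hC hbdd hbdd' s (A s w)
    rw [show (fun s => Lfun Q A 0 s (A s w)) = fun s => Real.log ‖A s w‖ from funext hL0]
    simp [Real.log_inv, measure_univ]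
    ring
  | succ j IH =>
    intro r v
    have hv1 : ‖(v : Euc d)‖ = 1 := mem_sphere_zero_iff_norm.mp v.2
    have hvne : (v : Euc d) ≠ 0 := fun h => by simp [h] at hv1
    set w : Euc d := A r (v : Euc d) with hw
    have hwne : w ≠ 0 := A_ne_zero hA hAinv hC hbdd hbdd' hvne r
    have hproj : ((projSphere hd w) : Euc d) = ‖w‖⁻¹ • w := by
      rw [projSphere, dif_neg hwne]
    have he : Measurable fun s : T => (s, projSphere hd w) :=
      measurable_id.prodMk measurable_const
    have hFun : measOpIter κh (j + 1) φ = fun z : T × UnitSphere d =>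
        Lfun Q A (j + 1) z.1 (A z.1 z.2.1) - Lfun Q A j z.1 (A z.1 z.2.1) :=
      funext fun z => IH z.1 z.2
    have hm1 : Measurable fun p : T × Euc d => (p.1, A p.1 p.2) :=
      measurable_fst.prodMk (hevalm.comp ((hA.comp measurable_fst).prodMk measurable_snd))
    have hLj : ∀ j' : ℕ, StronglyMeasurable fun p : T × Euc d => Lfun Q A j' p.1 (A p.1 p.2) :=
      fun j' => (Lfun_sm Q hA hAinv hC hbdd hbdd' j').comp_measurable hm1
    have hcoe : Measurable fun z : T × UnitSphere d => (z.1, (z.2 : Euc d)) :=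
      measurable_fst.prodMk (measurable_subtype_coe.comp measurable_snd)
    have hG : StronglyMeasurable fun z : T × UnitSphere d =>
        Lfun Q A (j + 1) z.1 (A z.1 z.2.1) - Lfun Q A j z.1 (A z.1 z.2.1) :=
      ((hLj (j+1)).comp_measurable hcoe).sub ((hLj j).comp_measurable hcoe)
    show ∫ z, measOpIter κh (j + 1) φ z ∂κh (r, v) = _
    rw [hFun, hκh r v, integral_map he.aemeasurable hG.aestronglyMeasurable]
    have hpt : ∀ s : T,
        Lfun Q A (j + 1) s (A s ((projSphere hd w) : Euc d))
          - Lfun Q A j s (A s ((projSphere hd w) : Euc d))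
        = Lfun Q A (j + 1) s (A s w) - Lfun Q A j s (A s w) := by
      intro s
      have h1 : A s ((projSphere hd w) : Euc d) = ‖w‖⁻¹ • (A s w) := by
        rw [hproj, ContinuousLinearMap.map_smul]
      have hAsw : A s w ≠ 0 := A_ne_zero hA hAinv hC hbdd hbdd' hwne s
      have hcpos : (0:ℝ) < ‖w‖⁻¹ := inv_pos.2 (norm_pos_iff.mpr hwne)
      rw [h1, Lfun_smul Q hA hAinv hC hbdd hbdd' (j+1) s hAsw hcpos,
        Lfun_smul Q hA hAinv hC hbdd hbdd' j s hAsw hcpos]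
      ring
    refine Eq.trans (integral_congr_ae (ae_of_all _ fun s => hpt s)) ?_
    have hint : ∀ j' : ℕ, Integrable (fun s => Lfun Q A j' s (A s w)) (Q r) := by
      intro j'
      have hg : Measurable fun s : T => (s, A s w) :=
        measurable_id.prodMk (hevalm.comp (hA.prodMk measurable_const))
      have hsm : AEStronglyMeasurable (fun s : T => Lfun Q A j' s (A s w)) (Q r) :=
        ((Lfun_sm Q hA hAinv hC hbdd hbdd' j').comp_measurable hg).aestronglyMeasurable
      refine integrable_of_bdd hsm (M := Real.log (C ^ j') + (Real.log C + |Real.log ‖w‖|))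
        (fun s => ?_)
      have hAsw : A s w ≠ 0 := A_ne_zero hA hAinv hC hbdd hbdd' hwne s
      refine (Lfun_abs_le Q hA hAinv hC hbdd hbdd' j' s hAsw).trans ?_
      exact add_le_add_right (abs_log_A_le hA hAinv hC hbdd hbdd' hwne s) _
    rw [integral_sub (hint (j+1)) (hint j),
      ← Lfun_succ Q hA hAinv hC hbdd hbdd' (j+1) r hwne,
      ← Lfun_succ Q hA hAinv hC hbdd hbdd' j r hwne]

end L

/-- Finite-horizon telescoping expansion of the additive process of the
projective Markov kernel for matrix products driven by Markovian noise. -/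
theorem finite_horizon_expansion
    (d : ℕ) (hd : 0 < d)
    {T : Type*} [MeasurableSpace T]
    (Q : Kernel T T) [IsMarkovKernel Q]
    (A : T → (Euc d →L[ℝ] Euc d)) (hA : Measurable A)
    (Ainv : T → (Euc d →L[ℝ] Euc d))
    (hAinv : ∀ t, (A t).comp (Ainv t) = ContinuousLinearMap.id ℝ (Euc d) ∧
      (Ainv t).comp (A t) = ContinuousLinearMap.id ℝ (Euc d))
    (C : ℝ) (hC : 1 ≤ C)
    (hbdd : ∀ t, ‖A t‖ ≤ C) (hbdd' : ∀ t, ‖Ainv t‖ ≤ C)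
    (κh : T × UnitSphere d → Measure (T × UnitSphere d))
    (hκh : ∀ t v, κh (t, v) = (Q t).map (fun s => (s, projSphere hd (A t v.1))))
    (φ : T × UnitSphere d → ℝ)
    (hφ : ∀ t v, φ (t, v) = Real.log ‖A t v.1‖) :
    ∀ n : ℕ, 1 ≤ n → ∀ (t : T) (v : UnitSphere d),
      ∑ j ∈ Finset.range n, measOpIter κh j φ (t, v)
        = ∫ s, Real.log ‖(prodCLM A (n - 1) s) (A t v.1)‖ ∂(chainLaw Q (n - 1) t) := by
  intro n hn t v
  obtain ⟨m, rfl⟩ : ∃ m, n = m + 1 := ⟨n - 1, (Nat.succ_pred_eq_of_pos hn).symm⟩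
  have hA2 : ∀ r, (Ainv r).comp (A r) = ContinuousLinearMap.id ℝ (Euc d) :=
    fun r => (hAinv r).2
  have hkey := key_step Q hA hA2 hC hbdd hbdd' hd κh hκh φ hφ
  have hv1 : ‖(v : Euc d)‖ = 1 := mem_sphere_zero_iff_norm.mp v.2
  have hvne : (v : Euc d) ≠ 0 := fun h => by simp [h] at hv1
  have hwne : A t (v : Euc d) ≠ 0 := A_ne_zero hA hA2 hC hbdd hbdd' hvne t
  rw [Nat.add_sub_cancel, Finset.sum_range_succ']
  have hsum : ∑ j ∈ Finset.range m, measOpIter κh (j + 1) φ (t, v)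
      = Lfun Q A m t (A t v.1) - Lfun Q A 0 t (A t v.1) := by
    rw [Finset.sum_congr rfl (fun j _ => hkey j t v)]
    exact Finset.sum_range_sub (fun j => Lfun Q A j t (A t v.1)) m
  rw [hsum, Lfun_zero Q hA hA2 hC hbdd hbdd']
  have h0 : measOpIter κh 0 φ (t, v) = Real.log ‖A t v.1‖ := hφ t v
  rw [h0]
  have hRHS : ∫ s, Real.log ‖(prodCLM A m s) (A t v.1)‖ ∂(chainLaw Q m t)
      = Lfun Q A m t (A t v.1) := rfl
  rw [hRHS]
  ring

end
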